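/- Let X and Y be Banach spaces such that either X or Y has the Dunford-Pettis property. Then for every bounded linear operator T : X → Y* and every weakly null sequence (xₙ) in X, the set {T(xₙ) : n ∈ ℕ} is Y-limited. -/

import Mathlib

open Filter Topology

/-- A sequence in a normed space is weakly null if it tends to `0` in the weak topology,
i.e. `f (y n) → 0` for every continuous linear functional `f`. -/
def WeaklyNullSeq {Y : Type*} [NormedAddCommGroup Y] [NormedSpace ℝ Y] (y : ℕ → Y) : Prop :=
  ∀ f : Y →L[ℝ] ℝ, Tendsto (fun n => f (y n)) atTop (𝓝 0)

/-- A set `H ⊆ Y*` is `Y`-limited if every weakly null sequence in `Y` converges to `0`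
uniformly on `H`. -/
def YLimited {Y : Type*} [NormedAddCommGroup Y] [NormedSpace ℝ Y]
    (H : Set (Y →L[ℝ] ℝ)) : Prop :=
  ∀ y : ℕ → Y, WeaklyNullSeq y →
    ∀ ε > (0 : ℝ), ∃ N : ℕ, ∀ n ≥ N, ∀ f ∈ H, |f (y n)| ≤ ε

/-- A Banach space `X` has the Dunford-Pettis property if `x*ₙ(xₙ) → 0` for all weakly
null sequences `(x*ₙ)` in `X*` and `(xₙ)` in `X`. -/
def DunfordPettisProp (X : Type*) [NormedAddCommGroup X] [NormedSpace ℝ X] : Prop :=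
  ∀ (φ : ℕ → (X →L[ℝ] ℝ)) (x : ℕ → X), WeaklyNullSeq φ → WeaklyNullSeq x →
    Tendsto (fun n => φ n (x n)) atTop (𝓝 0)

/-- Let `X` and `Y` be Banach spaces such that either `X` or `Y` has the
Dunford-Pettis property. Then for every bounded linear operator `T : X → Y*` and every
weakly null sequence `(xₙ)` in `X`, the set `{T xₙ : n ∈ ℕ}` is `Y`-limited. -/
theorem range_image_weaklyNull_isLimited_of_dunfordPettis
    {X Y : Type*} [NormedAddCommGroup X] [NormedSpace ℝ X] [CompleteSpace X]
    [NormedAddCommGroup Y] [NormedSpace ℝ Y] [CompleteSpace Y]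
    (hDP : DunfordPettisProp X ∨ DunfordPettisProp Y)
    (T : X →L[ℝ] (Y →L[ℝ] ℝ)) (x : ℕ → X) (hx : WeaklyNullSeq x) :
    YLimited {f | ∃ n : ℕ, f = T (x n)} := by
  intro y hy ε hε
  by_contra hcon
  push_neg at hcon
  -- extract bad indices
  have hsel : ∀ N : ℕ, ∃ m ≥ N, ∃ k : ℕ, ε < |T (x k) (y m)| := by
    intro N
    obtain ⟨m, hm, f, hf, hfe⟩ := hcon N
    obtain ⟨k, rfl⟩ := hf
    exact ⟨m, hm, k, hfe⟩
  choose m hm n hn using hsel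
  have hmt : Tendsto m atTop atTop := tendsto_atTop_mono hm tendsto_id
  by_cases hfib : ∃ n₀ : ℕ, {N | n N = n₀}.Infinite
  · -- some index repeats infinitely often
    obtain ⟨n₀, hinf⟩ := hfib
    have h0 : Tendsto (fun N => (T (x n₀)) (y (m N))) atTop (𝓝 0) :=
      (hy (T (x n₀))).comp hmt
    obtain ⟨N₀, hN₀⟩ := Metric.tendsto_atTop.1 h0 ε hε
    obtain ⟨N, hNmem, hNge⟩ := hinf.exists_gt N₀
    have := hN₀ N hNge.le
    rw [Real.dist_eq, sub_zero] at this
    have h2 := hn N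
    rw [hNmem] at h2
    exact absurd this (not_lt.2 h2.le)
  · -- all fibers finite : n tends to atTop
    push_neg at hfib
    have hnt : Tendsto n atTop atTop := by
      refine tendsto_atTop.2 fun b => ?_
      have hfin : {N | n N < b}.Finite := by
        have : {N | n N < b} ⊆ ⋃ j ∈ Finset.range b, {N | n N = j} := by
          intro N hN
          simp only [Set.mem_iUnion, Finset.mem_range]
          exact ⟨n N, hN, rfl⟩
        exact Set.Finite.subset (Set.Finite.biUnion (Finset.range b).finite_toSet
          fun j _ => hfib j) this
      have : ∀ᶠ N in cofinite, ¬ n N < b := (Set.Finite.eventually_cofinite_notMem hfin).mono fun N h => h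
      rw [Nat.cofinite_eq_atTop] at this
      exact this.mono fun N hN => not_lt.1 hN
    have hxn : WeaklyNullSeq (fun N => x (n N)) := fun f => (hx f).comp hnt
    have h0 : Tendsto (fun N => (T (x (n N))) (y (m N))) atTop (𝓝 0) := by
      rcases hDP with hX | hY
      · have hφ : WeaklyNullSeq (fun N => T.flip (y (m N))) := by
          intro F
          have : Tendsto (fun N => (F.comp T.flip) (y (m N))) atTop (𝓝 0) :=
            (hy (F.comp T.flip)).comp hmt
          simpa using this
        have := hX (fun N => T.flip (y (m N))) (fun N => x (n N)) hφ hxn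
        simpa using this
      · have hφ : WeaklyNullSeq (fun N => T (x (n N))) := by
          intro F
          have : Tendsto (fun N => (F.comp T) (x (n N))) atTop (𝓝 0) :=
            (hx (F.comp T)).comp hnt
          simpa using this
        exact hY (fun N => T (x (n N))) (fun N => y (m N)) hφ ((fun f => (hy f).comp hmt))
    obtain ⟨N₀, hN₀⟩ := Metric.tendsto_atTop.1 h0 ε hε
    have := hN₀ N₀ le_rfl
    rw [Real.dist_eq, sub_zero] at this
    exact absurd this (not_lt.2 (hn N₀).le)
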